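/- Let L = F_{2^{2k}} with k even, 3 ∤ k, and s an integer with gcd(s, 2k) = 1. Let ω ∈ L have multiplicative order 3. Then there exist nonzero β, γ ∈ L such that γ^{2^s+1} + ω β^{2^s+1} + 1 = 0 and γ^{2^k - 1} ≠ β^{2^k - 1}. -/

import Mathlib

open Finset Polynomial

section helpers

variable {F : Type*} [Field F] [Fintype F]

private lemma aux_card_le_natDegree {P : F[X]} (hP : P ≠ 0) {S : Finset F}
    (hS : ∀ x ∈ S, P.eval x = 0) : S.card ≤ P.natDegree := by
  classical
  have h1 : S ⊆ P.roots.toFinset := by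
    intro x hx
    rw [Multiset.mem_toFinset, Polynomial.mem_roots']
    exact ⟨hP, hS x hx⟩
  calc S.card ≤ P.roots.toFinset.card := Finset.card_le_card h1
    _ ≤ Multiset.card P.roots := Multiset.toFinset_card_le _
    _ ≤ P.natDegree := P.card_roots'

private lemma aux_card_pow_eq_one_le [DecidableEq F] {m : ℕ} (hm : 0 < m) :
    ((univ : Finset F).filter fun x => x ^ m = 1).card ≤ m := by
  have h := aux_card_le_natDegree (P := (X : F[X]) ^ m - C 1)
    (X_pow_sub_C_ne_zero hm 1)
    (S := (univ : Finset F).filter fun x => x ^ m = 1) ?_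
  · rwa [natDegree_X_pow_sub_C] at h
  · intro x hx
    rw [mem_filter] at hx
    simp [hx.2]

private lemma aux_frob_mul (v : F) (a : ℕ) (h : v ^ 2 ^ a = v) :
    ∀ m : ℕ, v ^ 2 ^ (a * m) = v := by
  intro m
  induction m with
  | zero => simp
  | succ m ih => rw [Nat.mul_succ, pow_add, pow_mul, ih, h]

private lemma aux_frob_gcd (v : F) : ∀ a b : ℕ, v ^ 2 ^ a = v → v ^ 2 ^ b = v →
    v ^ 2 ^ Nat.gcd a b = v := by
  intro a b
  induction a, b using Nat.gcd.induction with
  | H0 n => intro _ h; simpa using h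
  | H1 m n hm ih =>
    intro hm' hn'
    rw [Nat.gcd_rec]
    refine ih ?_ hm'
    have hd : m * (n / m) + n % m = n := Nat.div_add_mod n m
    have h1 : v ^ 2 ^ (m * (n / m) + n % m) = v := by rw [hd]; exact hn'
    rw [pow_add, pow_mul, aux_frob_mul v m hm' (n / m)] at h1
    exact h1

private lemma aux_surj {α : Type*} [DecidableEq α] {s T : Finset α} {f : α → α} {m : ℕ}
    (hm : 0 < m)
    (hmaps : ∀ x ∈ s, f x ∈ T)
    (hfib : ∀ a ∈ s, (s.filter fun x => f x = f a).card ≤ m)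
    (hT : T.card * m ≤ s.card) : ∀ z ∈ T, ∃ x ∈ s, f x = z := by
  have h1 : s.card ≤ m * (s.image f).card := by
    apply Finset.card_le_mul_card_image
    intro b hb
    obtain ⟨a, ha, rfl⟩ := Finset.mem_image.mp hb
    exact hfib a ha
  have h2 : s.image f ⊆ T := by
    intro z hz
    obtain ⟨x, hx, rfl⟩ := Finset.mem_image.mp hz
    exact hmaps x hx
  have h3 : T.card ≤ (s.image f).card := by
    have h4 := hT.trans h1
    rw [mul_comm] at h4
    exact Nat.le_of_mul_le_mul_left h4 hm
  have h5 : s.image f = T := Finset.eq_of_subset_of_card_le h2 h3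
  intro z hz
  rw [← h5] at hz
  obtain ⟨x, hx, hfx⟩ := Finset.mem_image.mp hz
  exact ⟨x, hx, hfx⟩

end helpers

set_option linter.unusedSectionVars false
set_option maxHeartbeats 1000000

/-- In `L = F_{2^{2k}}` with `k` even, `3 ∤ k`, `gcd(s,2k)=1`, and
`ω` of order 3, there exist nonzero `β, γ` with `γ^{2^s+1} + ω·β^{2^s+1} + 1 = 0`
and `γ^{2^k-1} ≠ β^{2^k-1}`. -/
theorem stmt10 (F : Type*) [Field F] [Fintype F] (k s : ℕ) (hk : 0 < k)
    (hke : Even k) (hk3 : ¬ 3 ∣ k)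
    (hcard : Fintype.card F = 2 ^ (2 * k)) (hgcd : Nat.gcd s (2 * k) = 1)
    (ω : F) (hω : orderOf ω = 3) :
    ∃ β γ : F, β ≠ 0 ∧ γ ≠ 0 ∧
      γ ^ (2 ^ s + 1) + ω * β ^ (2 ^ s + 1) + 1 = 0 ∧
      γ ^ (2 ^ k - 1) ≠ β ^ (2 ^ k - 1) := by
  classical
  obtain ⟨m, hm⟩ := hke
  have hk2 : 2 ≤ k := by omega
  -- numeric facts
  have h4m : ∀ M : ℕ, 4 ^ M % 3 = 1 := by
    intro M
    induction M with
    | zero => rfl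
    | succ M ih => rw [pow_succ]; omega
  have hrmod : 2 ^ k % 3 = 1 := by
    have h1 : 2 ^ k = 4 ^ m := by
      rw [hm, pow_add, show (4:ℕ) = 2 * 2 from rfl, mul_pow]
    rw [h1]; exact h4m m
  have hr4 : 4 ≤ 2 ^ k := by
    calc (4:ℕ) = 2 ^ 2 := rfl
    _ ≤ 2 ^ k := Nat.pow_le_pow_right (by norm_num) hk2
  obtain ⟨e, he⟩ : ∃ e, 2 ^ k = 3 * e + 1 := ⟨2 ^ k / 3, by omega⟩
  have he1 : 1 ≤ e := by omega
  set E : ℕ := (2 ^ k + 1) * e with hE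
  have hqr : 2 ^ (2 * k) = 2 ^ k * 2 ^ k := by rw [two_mul, pow_add]
  have hqE : 2 ^ (2 * k) = 3 * E + 1 := by rw [hqr, hE, he]; ring
  have hE1 : 1 ≤ E := by
    have : 1 * 1 ≤ (2 ^ k + 1) * e := Nat.mul_le_mul (by omega) he1
    omega
  -- characteristic 2
  have h2 : (2 : F) = 0 := by
    have hc : ((2 ^ (2 * k) : ℕ) : F) = 0 := by
      rw [← hcard]; exact FiniteField.cast_card_eq_zero F
    push_cast at hc
    exact pow_eq_zero_iff (by omega) |>.mp hc
  have hchar : ringChar F = 2 := by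
    have h1 : ringChar F ∣ 2 := ringChar.dvd (by push_cast; exact h2)
    have h2' : ringChar F ≠ 1 := CharP.ringChar_ne_one
    rcases (Nat.dvd_prime Nat.prime_two).mp h1 with h | h
    · exact absurd h h2'
    · exact h
  haveI hCharP : CharP F 2 := by rw [← hchar]; exact ringChar.charP F
  have haa : ∀ a : F, a + a = 0 := fun a => by
    rw [← two_mul, h2, zero_mul]
  have haddeq : ∀ a b : F, a + b = 0 → a = b := by
    intro a b h
    calc a = a + (b + b) := by rw [haa, add_zero]
    _ = (a + b) + b := by ring
    _ = b := by rw [h, zero_add]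
  have hfrob : ∀ (a b : F) (i : ℕ), (a + b) ^ 2 ^ i = a ^ 2 ^ i + b ^ 2 ^ i :=
    fun a b i => add_pow_char_pow a b 2 i
  -- ω facts
  have hω3 : ω ^ 3 = 1 := by rw [← hω]; exact pow_orderOf_eq_one ω
  have hω1 : ω ≠ 1 := by
    intro h; rw [h, orderOf_one] at hω; omega
  have hω0 : ω ≠ 0 := by
    intro h; rw [h] at hω3; norm_num at hω3
  have hωq : ω ^ 2 + ω + 1 = 0 := by
    have hfac : (ω - 1) * (ω ^ 2 + ω + 1) = ω ^ 3 - 1 := by ring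
    rw [hω3, sub_self] at hfac
    rcases mul_eq_zero.mp hfac with h | h
    · exact absurd (sub_eq_zero.mp h) hω1
    · exact h
  have hωr : ω ^ 2 ^ k = ω := by
    rw [he, pow_succ, pow_mul, hω3, one_pow, one_mul]
  have hωpow : ∀ a b : ℕ, a % 3 = b % 3 → ω ^ a = ω ^ b := by
    intro a b hab
    have h1 : ∀ c : ℕ, ω ^ c = ω ^ (c % 3) := by
      intro c
      conv_lhs => rw [← Nat.div_add_mod c 3]
      rw [pow_add, pow_mul, hω3, one_pow, one_mul]
    rw [h1 a, h1 b, hab]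
  -- trace lemmas
  have hshift : ∀ (N : ℕ) (u : F), u ^ 2 ^ N = u →
      (∑ i ∈ range N, (u ^ 2) ^ 2 ^ i) = ∑ i ∈ range N, u ^ 2 ^ i := by
    intro N u hu
    have h1 : ∀ i : ℕ, (u ^ 2) ^ 2 ^ i = u ^ 2 ^ (i + 1) := by
      intro i; rw [← pow_mul, ← pow_succ']
    have h2' : (∑ i ∈ range N, u ^ 2 ^ (i + 1)) + u ^ 2 ^ 0 =
        ∑ i ∈ range (N + 1), u ^ 2 ^ i := (Finset.sum_range_succ' (fun i => u ^ 2 ^ i) N).symm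
    rw [Finset.sum_range_succ] at h2'
    have h3 : ∑ i ∈ range N, (u ^ 2) ^ 2 ^ i = ∑ i ∈ range N, u ^ 2 ^ (i + 1) :=
      Finset.sum_congr rfl fun i _ => h1 i
    rw [h3]
    have h4 : u ^ 2 ^ 0 = u := by norm_num
    have h5 : u ^ 2 ^ N = u := hu
    rw [h4, h5] at h2'
    exact add_right_cancel h2'
  have hTr0_add : ∀ a b : F,
      (∑ i ∈ range k, (a + b) ^ 2 ^ i) =
        (∑ i ∈ range k, a ^ 2 ^ i) + ∑ i ∈ range k, b ^ 2 ^ i := by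
    intro a b
    rw [← Finset.sum_add_distrib]
    exact Finset.sum_congr rfl fun i _ => hfrob a b i
  have hTr01 : ∀ u : F, u ^ 2 ^ k = u →
      (∑ i ∈ range k, u ^ 2 ^ i) = 0 ∨ (∑ i ∈ range k, u ^ 2 ^ i) = 1 := by
    intro u hu
    have h1 : (∑ i ∈ range k, u ^ 2 ^ i) ^ 2 = ∑ i ∈ range k, u ^ 2 ^ i := by
      rw [sum_pow_char]
      have h2' : ∀ i ∈ range k, (u ^ 2 ^ i) ^ 2 = (u ^ 2) ^ 2 ^ i := by
        intro i _; rw [← pow_mul, ← pow_mul, mul_comm]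
      rw [Finset.sum_congr rfl h2']
      exact hshift k u hu
    have h2' : (∑ i ∈ range k, u ^ 2 ^ i) * ((∑ i ∈ range k, u ^ 2 ^ i) - 1) = 0 := by
      linear_combination h1
    rcases mul_eq_zero.mp h2' with h | h
    · exact Or.inl h
    · exact Or.inr (sub_eq_zero.mp h)
  have hTrF0 : ∀ u : F, u ^ 2 ^ k = u → (∑ i ∈ range (2 * k), u ^ 2 ^ i) = 0 := by
    intro u hu
    rw [two_mul, Finset.sum_range_add]
    have h1 : ∀ i ∈ range k, u ^ 2 ^ (k + i) = u ^ 2 ^ i := by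
      intro i _
      rw [pow_add, pow_mul, hu]
    rw [Finset.sum_congr rfl h1]
    exact haa _
  have hTrFsq : ∀ v : F,
      (∑ i ∈ range (2 * k), (v ^ 2) ^ 2 ^ i) = ∑ i ∈ range (2 * k), v ^ 2 ^ i := by
    intro v
    refine hshift (2 * k) v ?_
    rw [← hcard]
    exact FiniteField.pow_card v
  -- Artin-Schreier solvability
  have hAS : ∀ u : F, u ^ 2 ^ k = u → ∃ v : F, v ^ 2 + v = u := by
    intro u hu
    have hmaps : ∀ x ∈ (univ : Finset F),
        (fun v : F => v ^ 2 + v) x ∈ univ.filter (fun w : F => (∑ i ∈ range (2 * k), w ^ 2 ^ i) = 0) := by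
      intro v _
      refine mem_filter.mpr ⟨mem_univ _, ?_⟩
      have h1 : ∀ i ∈ range (2 * k), (v ^ 2 + v) ^ 2 ^ i = (v ^ 2) ^ 2 ^ i + v ^ 2 ^ i :=
        fun i _ => hfrob _ _ i
      rw [Finset.sum_congr rfl h1, Finset.sum_add_distrib, hTrFsq]
      exact haa _
    have hfib : ∀ a ∈ (univ : Finset F),
        (univ.filter fun x : F => (fun v : F => v ^ 2 + v) x = (fun v : F => v ^ 2 + v) a).card ≤ 2 := by
      intro a _
      have hsub : (univ.filter fun x : F => x ^ 2 + x = a ^ 2 + a) ⊆ {a, a + 1} := by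
        intro x hx
        rw [mem_filter] at hx
        have h1 : (x + a) * ((x + a) + 1) = 0 := by
          linear_combination hx.2 + (a ^ 2 + a + a * x) * h2
        rcases mul_eq_zero.mp h1 with h | h
        · have : x = a := haddeq x a h
          simp [this]
        · have h3 : x + a = 1 := haddeq _ _ h
          have : x = a + 1 := by
            calc x = x + (a + a) := by rw [haa, add_zero]
            _ = (x + a) + a := by ring
            _ = a + 1 := by rw [h3]; ring
          simp [this]
      calc (univ.filter fun x : F => x ^ 2 + x = a ^ 2 + a).card
          ≤ ({a, a + 1} : Finset F).card := Finset.card_le_card hsub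
        _ ≤ 2 := Finset.card_insert_le _ _ |>.trans (by simp)
    have hTcard : (univ.filter fun w : F => (∑ i ∈ range (2 * k), w ^ 2 ^ i) = 0).card ≤ 2 ^ (2 * k - 1) := by
      have hPne : (∑ i ∈ range (2 * k), (X : F[X]) ^ 2 ^ i) ≠ 0 := by
        intro h0
        have h1 : (∑ i ∈ range (2 * k), (X : F[X]) ^ 2 ^ i).coeff 1 = 1 := by
          rw [finset_sum_coeff, Finset.sum_eq_single 0]
          · norm_num
          · intro i hi hne
            rw [coeff_X_pow, if_neg]
            intro hcontr
            have h5 : 2 ≤ 2 ^ i := by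
              calc (2:ℕ) = 2 ^ 1 := rfl
              _ ≤ 2 ^ i := Nat.pow_le_pow_right (by norm_num) (by omega)
            omega
          · intro hmem
            exact absurd (mem_range.mpr (by omega)) hmem
        rw [h0, coeff_zero] at h1
        exact one_ne_zero h1.symm
      have hdeg : (∑ i ∈ range (2 * k), (X : F[X]) ^ 2 ^ i).natDegree ≤ 2 ^ (2 * k - 1) := by
        apply natDegree_sum_le_of_forall_le
        intro i hi
        rw [natDegree_X_pow]
        exact Nat.pow_le_pow_right (by norm_num) (by rw [mem_range] at hi; omega)
      refine le_trans (aux_card_le_natDegree hPne ?_) hdeg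
      intro x hx
      rw [mem_filter] at hx
      rw [eval_finset_sum]
      calc (∑ i ∈ range (2 * k), ((X : F[X]) ^ 2 ^ i).eval x)
          = ∑ i ∈ range (2 * k), x ^ 2 ^ i := by
            exact Finset.sum_congr rfl fun i _ => by rw [eval_pow, eval_X]
        _ = 0 := hx.2
    have hcards : (univ.filter fun w : F => (∑ i ∈ range (2 * k), w ^ 2 ^ i) = 0).card * 2
        ≤ (univ : Finset F).card := by
      rw [Finset.card_univ, hcard]
      have h1 : 2 ^ (2 * k) = 2 ^ (2 * k - 1) * 2 := by
        rw [← pow_succ]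
        congr 1
        omega
      omega
    obtain ⟨v, _, hv⟩ := aux_surj (by norm_num) hmaps hfib hcards u
      (mem_filter.mpr ⟨mem_univ _, hTrF0 u hu⟩)
    exact ⟨v, hv⟩
  -- the multiplicative setup
  have hS0card : ((univ : Finset F).erase 0).card = 2 ^ (2 * k) - 1 := by
    rw [Finset.card_erase_of_mem (mem_univ 0), Finset.card_univ, hcard]
  have hs_odd : s % 2 = 1 := by
    by_contra h
    have h2' : 2 ∣ s := by omega
    have h3' : 2 ∣ Nat.gcd s (2 * k) := Nat.dvd_gcd h2' ⟨k, rfl⟩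
    omega
  have h3n : 3 ∣ 2 ^ s + 1 := by
    obtain ⟨M, hM⟩ : ∃ M, s = 2 * M + 1 := ⟨s / 2, by omega⟩
    have h44 : 2 ^ s = 2 * 4 ^ M := by
      rw [hM, pow_succ, pow_mul]
      norm_num
      ring
    have h5 : ∀ M' : ℕ, 3 ∣ 2 * 4 ^ M' + 1 := by
      intro M'
      induction M' with
      | zero => decide
      | succ M' ih => rw [pow_succ]; omega
    rw [h44]
    exact h5 M
  obtain ⟨n', hn'⟩ := h3n
  have hgcd_sk : Nat.gcd s k = 1 :=
    Nat.Coprime.coprime_dvd_right ⟨2, by ring⟩ hgcd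
  have hfrob3 : ∀ v : F, v ≠ 0 → v ^ (2 ^ s + 1) = 1 → v ^ 3 = 1 := by
    intro v hv hvn
    have hq' : v ^ 2 ^ (2 * k) = v := by
      rw [← hcard]; exact FiniteField.pow_card v
    have hs' : v ^ 2 ^ (2 * s) = v := by
      have h2s : 1 ≤ 2 ^ s := Nat.one_le_two_pow
      have h1 : (2:ℕ) ^ (2 * s) = (2 ^ s + 1) * (2 ^ s - 1) + 1 := by
        rw [two_mul, pow_add]
        zify [h2s]
        ring
      rw [h1, pow_add, pow_one, pow_mul, hvn, one_pow, one_mul]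
    have hgcd2 : Nat.gcd (2 * s) (2 * k) = 2 := by
      rw [Nat.gcd_mul_left, hgcd_sk, mul_one]
    have h4 : v ^ 2 ^ 2 = v := by
      have h5 := aux_frob_gcd v (2 * s) (2 * k) hs' hq'
      rwa [hgcd2] at h5
    have h5 : v ^ 3 * v = 1 * v := by
      rw [one_mul, ← pow_succ]
      exact h4
    exact mul_right_cancel₀ hv h5
  have hsurjT : ∀ z : F, z ^ E = 1 → ∃ w : F, w ^ (2 ^ s + 1) = z := by
    have hmaps : ∀ x ∈ (univ : Finset F).erase 0,
        (fun x : F => x ^ (2 ^ s + 1)) x ∈ univ.filter (fun z : F => z ^ E = 1) := by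
      intro x hx
      have hx0 : x ≠ 0 := (Finset.mem_erase.mp hx).1
      refine mem_filter.mpr ⟨mem_univ _, ?_⟩
      rw [← pow_mul]
      have hq3E : 2 ^ (2 * k) - 1 = 3 * E := by omega
      have hEq : (2 ^ s + 1) * E = (2 ^ (2 * k) - 1) * n' := by
        rw [hq3E, hn']; ring
      rw [hEq, pow_mul]
      have hx1 : x ^ (2 ^ (2 * k) - 1) = 1 := by
        rw [← hcard]; exact FiniteField.pow_card_sub_one_eq_one x hx0
      rw [hx1, one_pow]
    have hfib : ∀ a ∈ (univ : Finset F).erase 0,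
        (((univ : Finset F).erase 0).filter fun x : F =>
          (fun x : F => x ^ (2 ^ s + 1)) x = (fun x : F => x ^ (2 ^ s + 1)) a).card ≤ 3 := by
      intro a ha
      have ha0 : a ≠ 0 := (Finset.mem_erase.mp ha).1
      have h1 : (((univ : Finset F).erase 0).filter fun x : F =>
          x ^ (2 ^ s + 1) = a ^ (2 ^ s + 1)).card
          ≤ ((univ : Finset F).filter fun v : F => v ^ 3 = 1).card := by
        apply Finset.card_le_card_of_injOn (fun x => x * a⁻¹)
        · intro x hx
          rw [Finset.mem_coe, mem_filter] at hx; rw [Finset.mem_coe]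
          have hx0 : x ≠ 0 := (Finset.mem_erase.mp hx.1).1
          refine mem_filter.mpr ⟨mem_univ _, ?_⟩
          apply hfrob3
          · exact mul_ne_zero hx0 (inv_ne_zero ha0)
          · rw [mul_pow, inv_pow, hx.2, mul_inv_cancel₀ (pow_ne_zero _ ha0)]
        · intro x _ y _ h
          exact mul_right_cancel₀ (inv_ne_zero ha0) h
      exact h1.trans (aux_card_pow_eq_one_le (by norm_num))
    have hTcard : ((univ : Finset F).filter fun z : F => z ^ E = 1).card ≤ E :=
      aux_card_pow_eq_one_le (by omega)
    have hcards : ((univ : Finset F).filter fun z : F => z ^ E = 1).card * 3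
        ≤ ((univ : Finset F).erase 0).card := by
      rw [hS0card]
      omega
    intro z hz
    obtain ⟨w, _, hw⟩ := aux_surj (by norm_num) hmaps hfib hcards z
      (mem_filter.mpr ⟨mem_univ _, hz⟩)
    exact ⟨w, hw⟩
  -- Step 1: existence of a good subfield element
  have hstep1 : ∃ c : F, c ≠ 0 ∧ c ^ 2 ^ k = c ∧
      (∑ i ∈ range k, (ω * c ^ 3) ^ 2 ^ i) = 1 := by
    rcases eq_or_lt_of_le hk2 with hk2' | hk4
    · -- k = 2
      refine ⟨1, one_ne_zero, one_pow _, ?_⟩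
      rw [← hk2']
      rw [Finset.sum_range_succ, Finset.sum_range_one]
      norm_num
      linear_combination hωq - h2
    · -- 4 ≤ k
      have hk4' : 4 ≤ k := by omega
      by_contra hno
      push_neg at hno
      have hall : ∀ c : F, c ≠ 0 → c ^ 2 ^ k = c →
          (∑ i ∈ range k, (ω * c ^ 3) ^ 2 ^ i) = 0 := by
        intro c hc hcr
        have hwc : (ω * c ^ 3) ^ 2 ^ k = ω * c ^ 3 := by
          rw [mul_pow, hωr, pow_right_comm, hcr]
        rcases hTr01 (ω * c ^ 3) hwc with h | h
        · exact h
        · exact absurd h (hno c hc hcr)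
      set P : Polynomial F := ∑ i ∈ range k,
        Polynomial.C (ω ^ 2 ^ i) * Polynomial.X ^ (if i = k - 1 then 2 ^ (k - 1) + 1 else 3 * 2 ^ i)
        with hP
      have hA2 : 2 ^ (k - 1) = 2 * 2 ^ (k - 2) := by
        rw [← pow_succ']
        congr 1
        omega
      have hA1 : 2 ^ k = 2 * 2 ^ (k - 1) := by
        rw [← pow_succ']
        congr 1
        omega
      have hA0 : 2 ≤ 2 ^ (k - 2) := by
        calc (2:ℕ) = 2 ^ 1 := rfl
        _ ≤ 2 ^ (k - 2) := Nat.pow_le_pow_right (by norm_num) (by omega)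
      have hPne : P ≠ 0 := by
        intro h0
        have hco : P.coeff 3 = ω := by
          rw [hP, finset_sum_coeff, Finset.sum_eq_single 0]
          · rw [if_neg (show (0:ℕ) ≠ k - 1 by omega)]
            norm_num
          · intro i hi hne
            rw [coeff_C_mul, coeff_X_pow, if_neg, mul_zero]
            split_ifs with h
            · omega
            · have h6 : 2 ≤ 2 ^ i := by
                calc (2:ℕ) = 2 ^ 1 := rfl
                _ ≤ 2 ^ i := Nat.pow_le_pow_right (by norm_num) (by omega)
              omega
          · intro hmem
            exact absurd (mem_range.mpr (by omega)) hmem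
        rw [h0, coeff_zero] at hco
        exact hω0 hco.symm
      have hPdeg : P.natDegree ≤ 3 * 2 ^ (k - 2) := by
        rw [hP]
        apply natDegree_sum_le_of_forall_le
        intro i hi
        refine le_trans (natDegree_mul_le) ?_
        rw [natDegree_C, natDegree_X_pow, zero_add]
        split_ifs with h
        · omega
        · have h7 : 2 ^ i ≤ 2 ^ (k - 2) := by
            apply Nat.pow_le_pow_right (by norm_num)
            rw [mem_range] at hi
            omega
          omega
      -- abundant roots
      have hq1 : 2 ^ (2 * k) - 1 = (2 ^ k + 1) * (2 ^ k - 1) := by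
        obtain ⟨w, hw⟩ := Nat.exists_eq_add_of_le (show 1 ≤ 2 ^ k by omega)
        have h11 : (1 + w) * (1 + w) = ((1 + w + 1) * (1 + w - 1)) + 1 := by
          rw [show 1 + w - 1 = w from by omega]
          ring
        rw [hqr, hw]
        omega
      have hS1card : 2 ^ k - 1 ≤
          (((univ : Finset F).erase 0).image fun x : F => x ^ (2 ^ k + 1)).card := by
        have h1 : ((univ : Finset F).erase 0).card
            ≤ (2 ^ k + 1) * (((univ : Finset F).erase 0).image fun x : F => x ^ (2 ^ k + 1)).card := by
          apply Finset.card_le_mul_card_image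
          intro b hb
          obtain ⟨a, ha, rfl⟩ := Finset.mem_image.mp hb
          have ha0 : a ≠ 0 := (Finset.mem_erase.mp ha).1
          have h8 : (((univ : Finset F).erase 0).filter fun x : F =>
              x ^ (2 ^ k + 1) = a ^ (2 ^ k + 1)).card
              ≤ ((univ : Finset F).filter fun v : F => v ^ (2 ^ k + 1) = 1).card := by
            apply Finset.card_le_card_of_injOn (fun x => x * a⁻¹)
            · intro x hx
              rw [Finset.mem_coe, mem_filter] at hx; rw [Finset.mem_coe]
              refine mem_filter.mpr ⟨mem_univ _, ?_⟩
              rw [mul_pow, inv_pow, hx.2, mul_inv_cancel₀ (pow_ne_zero _ ha0)]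
            · intro x _ y _ h
              exact mul_right_cancel₀ (inv_ne_zero ha0) h
          exact h8.trans (aux_card_pow_eq_one_le (by positivity))
        rw [hS0card, hq1] at h1
        exact Nat.le_of_mul_le_mul_left h1 (by positivity)
      have hev : ∀ z ∈ ((univ : Finset F).erase 0).image fun x : F => x ^ (2 ^ k + 1),
          P.eval z = 0 := by
        intro z hz
        obtain ⟨x, hxS, hzdef⟩ := Finset.mem_image.mp hz
        have hx0 : x ≠ 0 := (Finset.mem_erase.mp hxS).1
        have hz0 : z ≠ 0 := by rw [← hzdef]; exact pow_ne_zero _ hx0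
        have hz1 : z ^ (2 ^ k - 1) = 1 := by
          rw [← hzdef, ← pow_mul, ← hq1, ← hcard]
          exact FiniteField.pow_card_sub_one_eq_one x hx0
        have hzr : z ^ 2 ^ k = z := by
          calc z ^ 2 ^ k = z ^ (2 ^ k - 1) * z := by
                rw [← pow_succ]
                congr 1
                omega
          _ = z := by rw [hz1, one_mul]
        have hterm : ∀ i ∈ range k,
            (Polynomial.C (ω ^ 2 ^ i) * Polynomial.X ^
              (if i = k - 1 then 2 ^ (k - 1) + 1 else 3 * 2 ^ i)).eval z
            = (ω * z ^ 3) ^ 2 ^ i := by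
          intro i hi
          rw [eval_mul, eval_C, eval_pow, eval_X, mul_pow]
          congr 1
          have hzz : (z ^ 3) ^ 2 ^ i = z ^ (3 * 2 ^ i) := (pow_mul z 3 (2 ^ i)).symm
          rw [hzz]
          by_cases h : i = k - 1
          · rw [if_pos h, h]
            have h9 : 3 * 2 ^ (k - 1) = (2 ^ k - 1) + (2 ^ (k - 1) + 1) := by omega
            have h9' : z ^ (3 * 2 ^ (k - 1)) = z ^ (2 ^ k - 1) * z ^ (2 ^ (k - 1) + 1) := by
              rw [← pow_add, ← h9]
            rw [h9', hz1, one_mul]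
          · rw [if_neg h]
        have h10 : P.eval z = ∑ i ∈ range k, (ω * z ^ 3) ^ 2 ^ i := by
          rw [hP, eval_finset_sum]
          exact Finset.sum_congr rfl hterm
        rw [h10]
        exact hall z hz0 hzr
      have hfin := aux_card_le_natDegree hPne hev
      have hA3 : 2 ^ k = 4 * 2 ^ (k - 2) := by
        obtain ⟨K, hK⟩ : ∃ K, k = K + 2 := ⟨k - 2, by omega⟩
        rw [hK, Nat.add_sub_cancel, pow_add]
        ring
      omega
  -- main construction
  obtain ⟨c, hc0, hcr, hcTr⟩ := hstep1
  obtain ⟨d, hd⟩ : ∃ d : F, d = ω * c ^ 3 := ⟨_, rfl⟩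
  rw [← hd] at hcTr
  have hd0 : d ≠ 0 := by rw [hd]; exact mul_ne_zero hω0 (pow_ne_zero _ hc0)
  have hdr : d ^ 2 ^ k = d := by
    rw [hd, mul_pow, hωr, pow_right_comm, hcr]
  have hce : c ^ (3 * e) = 1 := by
    have h1 : c ^ (3 * e) * c = 1 * c := by
      rw [one_mul, ← pow_succ, ← he]
      exact hcr
    exact mul_right_cancel₀ hc0 h1
  have hde : d ^ e = ω ^ e := by
    rw [hd, mul_pow, ← pow_mul, hce, mul_one]
  obtain ⟨t, ht⟩ : ∃ t : F, t = d⁻¹ := ⟨_, rfl⟩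
  have ht0 : t ≠ 0 := by rw [ht]; exact inv_ne_zero hd0
  have htr : t ^ 2 ^ k = t := by rw [ht, inv_pow, hdr]
  obtain ⟨v, hv⟩ := hAS (d ^ 2) (by rw [pow_right_comm, hdr])
  obtain ⟨y, hy⟩ : ∃ y : F, y = t * v := ⟨_, rfl⟩
  have hyy : y ^ 2 + t * y = 1 := by
    have h1 : t ^ 2 * d ^ 2 = 1 := by
      rw [ht, ← mul_pow, inv_mul_cancel₀ hd0, one_pow]
    rw [hy]
    linear_combination t ^ 2 * hv + h1
  have hyeq : y ^ 2 + t * y + 1 = 0 := by linear_combination hyy + h2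
  have hy0 : y ≠ 0 := by
    intro h
    rw [h] at hyeq
    norm_num at hyeq
  have hyr_ne : y ^ 2 ^ k ≠ y := by
    intro hyr
    have hvr : v ^ 2 ^ k = v := by
      have hv' : v = y * d := by
        rw [hy, ht]
        field_simp
      rw [hv', mul_pow, hyr, hdr]
    have hTr1 : (∑ i ∈ range k, (d ^ 2) ^ 2 ^ i) = 1 := by
      rw [hshift k d hdr]
      exact hcTr
    have hTr2 : (∑ i ∈ range k, (d ^ 2) ^ 2 ^ i) = 0 := by
      rw [← hv, hTr0_add, hshift k v hvr]
      exact haa _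
    rw [hTr1] at hTr2
    exact one_ne_zero hTr2
  have hyr : y ^ 2 ^ k = y + t := by
    have hq1 : (y ^ 2 + t * y + 1) ^ 2 ^ k
        = (y ^ 2 ^ k) ^ 2 + t * (y ^ 2 ^ k) + 1 := by
      rw [hfrob (y ^ 2 + t * y) 1 k, one_pow, hfrob (y ^ 2) (t * y) k,
        mul_pow, htr, pow_right_comm]
    have hP0 : (y ^ 2 ^ k) ^ 2 + t * (y ^ 2 ^ k) + 1 = 0 := by
      rw [← hq1, hyeq]
      exact zero_pow (by positivity)
    have hfactor : (y ^ 2 ^ k + y) * (y ^ 2 ^ k + (y + t)) = 0 := by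
      linear_combination hP0 + hyeq + (y ^ 2 ^ k * y - 1) * h2
    rcases mul_eq_zero.mp hfactor with h | h
    · exact absurd (haddeq _ _ h) hyr_ne
    · exact haddeq _ _ h
  have hy1 : y ≠ 1 := by
    intro h
    apply hyr_ne
    rw [h, one_pow]
  obtain ⟨x, hx⟩ : ∃ x : F, x = 1 + y := ⟨_, rfl⟩
  have hx0 : x ≠ 0 := by
    rw [hx]
    intro h
    exact hy1 (haddeq 1 y h).symm
  have hxr : x ^ 2 ^ k = 1 + y + t := by
    rw [hx, hfrob 1 y k, one_pow, hyr, add_assoc]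
  have hxr1 : x ^ (2 ^ k + 1) = t := by
    rw [pow_succ, hxr, hx]
    linear_combination hyeq + y * h2
  have hyr1 : y ^ (2 ^ k + 1) = 1 := by
    rw [pow_succ, hyr]
    linear_combination hyeq - h2
  -- E-th powers
  have hyE : y ^ E = 1 := by rw [hE, pow_mul, hyr1, one_pow]
  obtain ⟨c2, hc2⟩ : ∃ c2 : F, c2 = ω ^ 2 * x := ⟨_, rfl⟩
  have hc20 : c2 ≠ 0 := by rw [hc2]; exact mul_ne_zero (pow_ne_zero _ hω0) hx0
  have hte : t ^ e = (ω ^ e)⁻¹ := by rw [ht, inv_pow, hde]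
  have hc2E : c2 ^ E = 1 := by
    have h1 : x ^ E = (ω ^ e)⁻¹ := by rw [hE, pow_mul, hxr1, hte]
    have h2E : 2 * E = e + 3 * (e * (2 * e + 1)) := by rw [hE, he]; ring
    have h2' : ω ^ (2 * E) = ω ^ e := by
      apply hωpow
      rw [h2E, Nat.add_mul_mod_self_left]
    rw [hc2, mul_pow, ← pow_mul, h1, h2', mul_inv_cancel₀ (pow_ne_zero _ hω0)]
  obtain ⟨γ, hγ⟩ := hsurjT y hyE
  obtain ⟨β, hβ⟩ := hsurjT c2 hc2E
  have hγ0 : γ ≠ 0 := by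
    intro h
    rw [h, zero_pow (by positivity)] at hγ
    exact hy0 hγ.symm
  have hβ0 : β ≠ 0 := by
    intro h
    rw [h, zero_pow (by positivity)] at hβ
    exact hc20 hβ.symm
  refine ⟨β, γ, hβ0, hγ0, ?_, ?_⟩
  · rw [hγ, hβ, hc2, hx]
    linear_combination (1 + y) * hω3 + (y + 1) * h2
  · intro hcon
    have hk1 : 2 ^ k - 1 + 1 = 2 ^ k := by omega
    have hgb : γ ^ 2 ^ k * β = β ^ 2 ^ k * γ := by
      calc γ ^ 2 ^ k * β = γ ^ (2 ^ k - 1) * (γ * β) := by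
            rw [← mul_assoc, ← pow_succ, hk1]
      _ = β ^ (2 ^ k - 1) * (β * γ) := by rw [hcon]; ring
      _ = β ^ 2 ^ k * γ := by rw [← mul_assoc, ← pow_succ, hk1]
    have hyc2 : y ^ 2 ^ k * c2 = c2 ^ 2 ^ k * y := by
      have h1 : (γ ^ 2 ^ k) ^ (2 ^ s + 1) * β ^ (2 ^ s + 1)
          = (β ^ 2 ^ k) ^ (2 ^ s + 1) * γ ^ (2 ^ s + 1) := by
        rw [← mul_pow, ← mul_pow, hgb]
      rw [pow_right_comm γ, pow_right_comm β, hγ, hβ] at h1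
      exact h1
    have hc2r : c2 ^ 2 ^ k = ω ^ 2 * (1 + y + t) := by
      rw [hc2, mul_pow, hxr, ← pow_mul]
      congr 1
      apply hωpow
      have h12 : 2 * 2 ^ k = 2 + 3 * (2 * e) := by rw [he]; ring
      rw [h12, Nat.add_mul_mod_self_left]
    rw [hyr, hc2r, hc2, hx] at hyc2
    have ht0' : ω ^ 2 * t = 0 := by linear_combination hyc2
    rcases mul_eq_zero.mp ht0' with h | h
    · exact pow_ne_zero 2 hω0 h
    · exact ht0 h
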